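/- Let V be a smooth manifold with dim V < n, let φ : V → ℝ^{n+1} be a smooth immersion (its differential is injective at every point) with ‖φ(x)‖ = 1 for all x ∈ V, and let (p, ξ) be a contact element with p ∉ φ(V). Let ρ : V → ℝ be a smooth function with ρ(x) ∈ (0, π) and cos ρ(x) = φ(x)·(cos ρ(x) p + sin ρ(x) ξ) for all x ∈ V (i.e., ρ = r_{(p,ξ)} ∘ φ). Then a point x₀ ∈ V is a critical point of ρ (the differential of ρ at x₀ is zero) if and only if X·(cos ρ(x₀) p + sin ρ(x₀) ξ) = 0 for every vector X in the image of the differential of φ at x₀; that is, if and only if the sphere of the parabolic pencil determined by (p,ξ) through φ(x₀) is tangent to the submanifold φ(V) at φ(x₀). -/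

import Mathlib

open scoped RealInnerProductSpace Manifold

/-- Let `V` be a smooth manifold of dimension `k < n`, let `φ : V → ℝ^{n+1}` be a smooth
immersion taking values in the unit sphere `Sⁿ`, and let `(p, ξ)` be a contact element with
`p ∉ φ(V)`.  Let `ρ : V → ℝ` be the smooth function with `ρ x ∈ (0,π)` and
`cos (ρ x) = φ(x)·(cos (ρ x) p + sin (ρ x) ξ)` (i.e. `ρ = r_{(p,ξ)} ∘ φ`).  Then `x₀ ∈ V`
is a critical point of `ρ` iff `X·(cos (ρ x₀) p + sin (ρ x₀) ξ) = 0` for every `X` in the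
image of the differential of `φ` at `x₀`, i.e. iff the sphere of the parabolic pencil
determined by `(p, ξ)` through `φ(x₀)` is tangent to `φ(V)` at `φ(x₀)`. -/
theorem critical_point_iff_pencil_sphere_tangent (n k : ℕ) (hk : k < n)
    {V : Type*} [TopologicalSpace V] [ChartedSpace (EuclideanSpace ℝ (Fin k)) V]
    [IsManifold (𝓡 k) (⊤ : ℕ∞) V]
    (φ : V → EuclideanSpace ℝ (Fin (n + 1)))
    (hφ : ContMDiff (𝓡 k) 𝓘(ℝ, EuclideanSpace ℝ (Fin (n + 1))) (⊤ : ℕ∞) φ)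
    (himm : ∀ x : V,
      Function.Injective (mfderiv (𝓡 k) 𝓘(ℝ, EuclideanSpace ℝ (Fin (n + 1))) φ x))
    (hunit : ∀ x : V, ‖φ x‖ = 1)
    (p ξ : EuclideanSpace ℝ (Fin (n + 1))) (hp : ‖p‖ = 1) (hξ : ‖ξ‖ = 1)
    (hpξ : ⟪p, ξ⟫ = 0) (hpV : p ∉ Set.range φ)
    (ρ : V → ℝ) (hρs : ContMDiff (𝓡 k) 𝓘(ℝ, ℝ) (⊤ : ℕ∞) ρ)
    (hρ : ∀ x : V, ρ x ∈ Set.Ioo 0 Real.pi ∧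
      Real.cos (ρ x) = ⟪φ x, Real.cos (ρ x) • p + Real.sin (ρ x) • ξ⟫)
    (x₀ : V) :
    mfderiv (𝓡 k) 𝓘(ℝ, ℝ) ρ x₀ = 0 ↔
      ∀ v : TangentSpace (𝓡 k) x₀,
        @inner ℝ (EuclideanSpace ℝ (Fin (n + 1))) _
          (mfderiv (𝓡 k) 𝓘(ℝ, EuclideanSpace ℝ (Fin (n + 1))) φ x₀ v)
          (Real.cos (ρ x₀) • p + Real.sin (ρ x₀) • ξ) = 0 := by
  classical
  set D := mfderiv (𝓡 k) 𝓘(ℝ, ℝ) ρ x₀ with hDdef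
  set F := mfderiv (𝓡 k) 𝓘(ℝ, EuclideanSpace ℝ (Fin (n + 1))) φ x₀ with hFdef
  have hρd : MDifferentiableAt (𝓡 k) 𝓘(ℝ, ℝ) ρ x₀ := (hρs x₀).mdifferentiableAt (by simp)
  have hφd : MDifferentiableAt (𝓡 k) 𝓘(ℝ, EuclideanSpace ℝ (Fin (n + 1))) φ x₀ :=
    (hφ x₀).mdifferentiableAt (by simp)
  have hDm : HasMFDerivAt (𝓡 k) 𝓘(ℝ, ℝ) ρ x₀ D := hρd.hasMFDerivAt
  have hFm : HasMFDerivAt (𝓡 k) 𝓘(ℝ, EuclideanSpace ℝ (Fin (n + 1))) φ x₀ F :=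
    hφd.hasMFDerivAt
  -- abbreviations
  have hcos : HasMFDerivAt (𝓡 k) 𝓘(ℝ, ℝ) (fun x => Real.cos (ρ x)) x₀
      ((ContinuousLinearMap.smulRight (1 : ℝ →L[ℝ] ℝ) (-Real.sin (ρ x₀))).comp D) :=
    ((Real.hasDerivAt_cos (ρ x₀)).hasFDerivAt.hasMFDerivAt).comp x₀ hDm
  have hsin : HasMFDerivAt (𝓡 k) 𝓘(ℝ, ℝ) (fun x => Real.sin (ρ x)) x₀
      ((ContinuousLinearMap.smulRight (1 : ℝ →L[ℝ] ℝ) (Real.cos (ρ x₀))).comp D) :=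
    ((Real.hasDerivAt_sin (ρ x₀)).hasFDerivAt.hasMFDerivAt).comp x₀ hDm
  have ha : HasMFDerivAt (𝓡 k) 𝓘(ℝ, ℝ) (fun x => ⟪p, φ x⟫) x₀ ((innerSL ℝ p).comp F) :=
    ((innerSL ℝ p).hasFDerivAt.hasMFDerivAt).comp x₀ hFm
  have hb : HasMFDerivAt (𝓡 k) 𝓘(ℝ, ℝ) (fun x => ⟪ξ, φ x⟫) x₀ ((innerSL ℝ ξ).comp F) :=
    ((innerSL ℝ ξ).hasFDerivAt.hasMFDerivAt).comp x₀ hFm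
  -- the constraint function, rewritten with scalars
  have hconstraint : ∀ x : V, Real.cos (ρ x) =
      Real.cos (ρ x) * ⟪p, φ x⟫ + Real.sin (ρ x) * ⟪ξ, φ x⟫ := by
    intro x
    have h := (hρ x).2
    rw [inner_add_right, real_inner_smul_right, real_inner_smul_right,
      real_inner_comm p (φ x), real_inner_comm ξ (φ x)] at h
    exact h
  -- derivative of cos ρ - (cos ρ * ⟪p,φ⟫ + sin ρ * ⟪ξ,φ⟫) is zero
  have hmul1 : HasMFDerivAt (𝓡 k) 𝓘(ℝ, ℝ) (fun x => Real.cos (ρ x) * ⟪p, φ x⟫) x₀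
      (Real.cos (ρ x₀) • ((innerSL ℝ p).comp F) +
        (⟪p, φ x₀⟫ : ℝ) • ((ContinuousLinearMap.smulRight (1 : ℝ →L[ℝ] ℝ)
          (-Real.sin (ρ x₀))).comp D)) := hcos.mul ha
  have hmul2 : HasMFDerivAt (𝓡 k) 𝓘(ℝ, ℝ) (fun x => Real.sin (ρ x) * ⟪ξ, φ x⟫) x₀
      (Real.sin (ρ x₀) • ((innerSL ℝ ξ).comp F) +
        (⟪ξ, φ x₀⟫ : ℝ) • ((ContinuousLinearMap.smulRight (1 : ℝ →L[ℝ] ℝ)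
          (Real.cos (ρ x₀))).comp D)) := hsin.mul hb
  have hg : HasMFDerivAt (𝓡 k) 𝓘(ℝ, ℝ)
      (fun x => Real.cos (ρ x) - (Real.cos (ρ x) * ⟪p, φ x⟫ + Real.sin (ρ x) * ⟪ξ, φ x⟫)) x₀
      (((ContinuousLinearMap.smulRight (1 : ℝ →L[ℝ] ℝ) (-Real.sin (ρ x₀))).comp D) -
        ((Real.cos (ρ x₀) • ((innerSL ℝ p).comp F) +
          (⟪p, φ x₀⟫ : ℝ) • ((ContinuousLinearMap.smulRight (1 : ℝ →L[ℝ] ℝ)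
            (-Real.sin (ρ x₀))).comp D)) +
         (Real.sin (ρ x₀) • ((innerSL ℝ ξ).comp F) +
          (⟪ξ, φ x₀⟫ : ℝ) • ((ContinuousLinearMap.smulRight (1 : ℝ →L[ℝ] ℝ)
            (Real.cos (ρ x₀))).comp D)))) := hcos.sub (hmul1.add hmul2)
  have hg0 : HasMFDerivAt (𝓡 k) 𝓘(ℝ, ℝ)
      (fun x => Real.cos (ρ x) - (Real.cos (ρ x) * ⟪p, φ x⟫ + Real.sin (ρ x) * ⟪ξ, φ x⟫)) x₀
      (0 : TangentSpace (𝓡 k) x₀ →L[ℝ] ℝ) := by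
    have : (fun x : V => Real.cos (ρ x) -
        (Real.cos (ρ x) * ⟪p, φ x⟫ + Real.sin (ρ x) * ⟪ξ, φ x⟫)) = fun _ => (0 : ℝ) := by
      funext x; rw [← hconstraint x]; ring
    rw [this]
    exact hasMFDerivAt_const (0 : ℝ) x₀
  have hLzero := hg.mfderiv.symm.trans hg0.mfderiv
  -- the key pointwise identity
  set A : ℝ := Real.sin (ρ x₀) * (1 - ⟪p, φ x₀⟫) + Real.cos (ρ x₀) * ⟪ξ, φ x₀⟫ with hAdef
  have key : ∀ v : TangentSpace (𝓡 k) x₀,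
      @inner ℝ (EuclideanSpace ℝ (Fin (n + 1))) _ (F v)
        (Real.cos (ρ x₀) • p + Real.sin (ρ x₀) • ξ) = -(show ℝ from D v) * A := by
    intro v
    have h0 : (show ℝ from D v) * (-Real.sin (ρ x₀)) -
        (Real.cos (ρ x₀) * (@inner ℝ (EuclideanSpace ℝ (Fin (n + 1))) _ p (F v)) +
          (⟪p, φ x₀⟫ : ℝ) * ((show ℝ from D v) * (-Real.sin (ρ x₀))) +
          (Real.sin (ρ x₀) * (@inner ℝ (EuclideanSpace ℝ (Fin (n + 1))) _ ξ (F v)) +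
            (⟪ξ, φ x₀⟫ : ℝ) * ((show ℝ from D v) * Real.cos (ρ x₀)))) = 0 :=
      DFunLike.congr_fun hLzero v
    have hgoal : @inner ℝ (EuclideanSpace ℝ (Fin (n + 1))) _ (F v)
        (Real.cos (ρ x₀) • p + Real.sin (ρ x₀) • ξ) =
        Real.cos (ρ x₀) * (@inner ℝ (EuclideanSpace ℝ (Fin (n + 1))) _ p (F v)) +
          Real.sin (ρ x₀) * (@inner ℝ (EuclideanSpace ℝ (Fin (n + 1))) _ ξ (F v)) := by
      exact (fun w : EuclideanSpace ℝ (Fin (n + 1)) => by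
        rw [inner_add_right, real_inner_smul_right, real_inner_smul_right,
          real_inner_comm p w, real_inner_comm ξ w] :
        ∀ w : EuclideanSpace ℝ (Fin (n + 1)), ⟪w, Real.cos (ρ x₀) • p + Real.sin (ρ x₀) • ξ⟫ =
          Real.cos (ρ x₀) * ⟪p, w⟫ + Real.sin (ρ x₀) * ⟪ξ, w⟫) (F v)
    rw [hgoal, hAdef]
    linear_combination -h0
  -- A ≠ 0
  have hA : A ≠ 0 := by
    intro h0
    rw [hAdef] at h0
    have hc := hconstraint x₀
    set a : ℝ := ⟪p, φ x₀⟫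
    set b : ℝ := ⟪ξ, φ x₀⟫
    have hsc : Real.sin (ρ x₀) ^ 2 + Real.cos (ρ x₀) ^ 2 = 1 := Real.sin_sq_add_cos_sq _
    have hspos : 0 < Real.sin (ρ x₀) :=
      Real.sin_pos_of_pos_of_lt_pi (hρ x₀).1.1 (hρ x₀).1.2
    have h1 : Real.cos (ρ x₀) * (1 - a) = Real.sin (ρ x₀) * b := by linear_combination hc
    have h2 : Real.sin (ρ x₀) * (1 - a) = -(Real.cos (ρ x₀) * b) := by linear_combination h0
    have h3 : (1 - a) = 0 := by
      linear_combination Real.sin (ρ x₀) * h2 + Real.cos (ρ x₀) * h1 - (1 - a) * hsc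
    have ha1 : a = 1 := by linarith
    have hsb : Real.sin (ρ x₀) * b = 0 := by
      rw [ha1, mul_one] at hc; linarith
    have hb0 : b = 0 := by
      rcases mul_eq_zero.mp hsb with h | h
      · linarith
      · exact h
    have hpy : p = φ x₀ := (inner_eq_one_iff_of_norm_eq_one hp (hunit x₀)).mp ha1
    exact hpV ⟨x₀, hpy.symm⟩
  constructor
  · intro h v
    have hD0 : (show ℝ from D v) = 0 := by rw [h]; rfl
    rw [key v, hD0]; ring
  · intro h
    ext v
    have h1 := key v
    rw [h v] at h1
    have hDv : (show ℝ from D v) = 0 := by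
      rcases mul_eq_zero.mp h1.symm with hh | hh
      · linarith [neg_eq_zero.mp hh]
      · exact absurd hh hA
    exact hDv
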